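/- Unified one-shot converse via Hölder: Let (X,Y) be discrete random variables on countable alphabets, ρ > 0, α = 1/(1+ρ), and 0 ≤ ε < 1. Let ε̃ : 𝒳×𝒴 → [0,1] and κ : 𝒳×𝒴 → (0,∞) be functions, and let K(X,Y) be the random variable equal to κ(X,Y) with probability 1−ε̃(X,Y) and 0 with probability ε̃(X,Y) (conditionally on (X,Y)). Define R(ε̃,κ) = sup_y ∑_{x : ε̃(x,y)<1} 1/κ(x,y). For any fixed y, Hölder's inequality yields E[K(X,Y)^ρ | Y=y] ≥ exp( ρ H_α^{δ(y)}(P_{X|Y=y}) − ρ log ∑_{x: ε̃(x,y)<1} 1/κ(x,y) ), where δ(y) = E[ε̃(X,Y) | Y=y] and H_α^{δ}(·) is the δ-smooth Rényi entropy of order α. -/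

import Mathlib

/-- Feasible values `∑_x Q(x)^α` for sub-distributions `Q ≤ P` with mass `≥ 1 − δ`. -/
def smoothRenyiVals {X : Type*} (α δ : ℝ) (P : X → ℝ) : Set ℝ :=
  {s | ∃ Q : X → ℝ, (∀ x, 0 ≤ Q x ∧ Q x ≤ P x) ∧ 1 - δ ≤ ∑' x, Q x ∧
    Summable (fun x => Q x ^ α) ∧ s = ∑' x, Q x ^ α}

/-- The `δ`-smooth Rényi entropy of order `α` (base 2). -/
noncomputable def smoothRenyi {X : Type*} (α δ : ℝ) (P : X → ℝ) : ℝ :=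
  (1 / (1 - α)) * Real.logb 2 (sInf (smoothRenyiVals α δ P))

/-- Unified one-shot converse via Hölder's inequality: for a fixed `y`, with
`α = 1/(1+ρ)` and `δ(y) = E[ε̃(X,Y) | Y = y]`,
`E[K(X,Y)^ρ | Y=y] ≥ 2^( ρ H_α^{δ(y)}(P_{X|Y=y}) − ρ log₂ ∑_{x : ε̃(x,y)<1} 1/κ(x,y) )`,
where `E[K(X,Y)^ρ | Y=y] = ∑_x (1−ε̃(x,y)) P_{X|Y}(x|y) κ(x,y)^ρ`. -/
theorem unified_one_shot_converse {X Y : Type*} [Countable X] [Countable Y]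
    (p : X → Y → ℝ) (pY : Y → ℝ) (ρ : ℝ) (hρ : 0 < ρ)
    (εt κ : X → Y → ℝ)
    (hp : ∀ x y, 0 ≤ p x y) (hpY : ∀ y, pY y = ∑' x, p x y)
    (hpYpos : ∀ y, 0 < pY y) (hsum : ∑' y, pY y = 1)
    (hεt : ∀ x y, 0 ≤ εt x y ∧ εt x y ≤ 1)
    (hκ : ∀ x y, 0 < κ x y)
    (y : Y) (δy : ℝ)
    (hδy : δy = ∑' x, (p x y / pY y) * εt x y) (hδy1 : δy < 1)
    (hS : Summable fun x => if εt x y < 1 then 1 / κ x y else 0)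
    (hK : Summable fun x => (1 - εt x y) * (p x y / pY y) * κ x y ^ ρ)
    (hL : Summable fun x => ((1 - εt x y) * (p x y / pY y)) ^ (1 / (1 + ρ))) :
    (2 : ℝ) ^ (ρ * smoothRenyi (1 / (1 + ρ)) δy (fun x => p x y / pY y)
        - ρ * Real.logb 2 (∑' x, if εt x y < 1 then 1 / κ x y else 0)) ≤
      ∑' x, (1 - εt x y) * (p x y / pY y) * κ x y ^ ρ := by
  have hρ1 : (0:ℝ) < 1 + ρ := by linarith
  set α : ℝ := 1 / (1 + ρ) with hα
  have hα0 : 0 < α := by positivity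
  have hα1 : α ≤ 1 := by
    rw [hα, div_le_one hρ1]; linarith
  set P : X → ℝ := fun x => p x y / pY y with hPdef
  have hP0 : ∀ x, 0 ≤ P x := fun x => div_nonneg (hp x y) (hpYpos y).le
  -- summability of p · y
  have hpsum : Summable (fun x => p x y) := by
    by_contra h
    have := tsum_eq_zero_of_not_summable h
    rw [← hpY y] at this
    exact absurd this (hpYpos y).ne'
  have hPsum : Summable P := hpsum.div_const _
  have hPsum1 : ∑' x, P x = 1 := by
    rw [hPdef]
    rw [tsum_div_const, ← hpY y, div_self (hpYpos y).ne']
  have hPle1 : ∀ x, P x ≤ 1 := by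
    intro x
    rw [← hPsum1]
    exact hPsum.le_tsum x fun b _ => hP0 b
  set Q : X → ℝ := fun x => (1 - εt x y) * P x with hQdef
  have hQ0 : ∀ x, 0 ≤ Q x := fun x =>
    mul_nonneg (by linarith [(hεt x y).2]) (hP0 x)
  have hQP : ∀ x, Q x ≤ P x := fun x =>
    mul_le_of_le_one_left (hP0 x) (by linarith [(hεt x y).1])
  have hQsum : Summable Q := hPsum.of_nonneg_of_le hQ0 hQP
  have hEsum : Summable (fun x => P x * εt x y) :=
    hPsum.of_nonneg_of_le (fun x => mul_nonneg (hP0 x) (hεt x y).1)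
      (fun x => mul_le_of_le_one_right (hP0 x) (hεt x y).2)
  have hQmass : 1 - δy ≤ ∑' x, Q x := by
    have : ∀ x, Q x = P x - P x * εt x y := by intro x; simp [hQdef]; ring
    rw [tsum_congr this, hPsum.tsum_sub hEsum, hPsum1, hδy]
  have hLQ : Summable (fun x => Q x ^ α) := hL
  set I : ℝ := sInf (smoothRenyiVals α δy P) with hIdef
  have hmem : (∑' x, Q x ^ α) ∈ smoothRenyiVals α δy P :=
    ⟨Q, fun x => ⟨hQ0 x, hQP x⟩, hQmass, hLQ, rfl⟩
  have hlb : ∀ s ∈ smoothRenyiVals α δy P, 1 - δy ≤ s := by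
    rintro s ⟨Q', hQ', hmass, hsumα, rfl⟩
    have hQ'sum : Summable Q' :=
      hPsum.of_nonneg_of_le (fun x => (hQ' x).1) (fun x => (hQ' x).2)
    have hpt : ∀ x, Q' x ≤ Q' x ^ α := by
      intro x
      rcases eq_or_lt_of_le (hQ' x).1 with h0 | h0
      · rw [← h0, Real.zero_rpow hα0.ne']
      · calc Q' x = Q' x ^ (1:ℝ) := (Real.rpow_one _).symm
          _ ≤ Q' x ^ α := Real.rpow_le_rpow_of_exponent_ge h0
            (le_trans (hQ' x).2 (hPle1 x)) hα1
    exact le_trans hmass (le_trans (hQ'sum.tsum_le_tsum hpt hsumα) le_rfl)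
  have hIlb : 1 - δy ≤ I := le_csInf ⟨_, hmem⟩ hlb
  have hI0 : 0 < I := lt_of_lt_of_le (by linarith) hIlb
  have hIle : I ≤ ∑' x, Q x ^ α :=
    csInf_le ⟨1 - δy, hlb⟩ hmem
  -- S positive
  set S : ℝ := ∑' x, if εt x y < 1 then 1 / κ x y else 0 with hSdef
  have hterm0 : ∀ x, (0:ℝ) ≤ if εt x y < 1 then 1 / κ x y else 0 := by
    intro x; split
    · exact div_nonneg zero_le_one (hκ x y).le
    · exact le_rfl
  have hx0 : ∃ x, εt x y < 1 := by
    by_contra h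
    push_neg at h
    have he1 : ∀ x, εt x y = 1 := fun x => le_antisymm (hεt x y).2 (h x)
    have : δy = 1 := by
      rw [hδy, ← hPsum1]
      exact tsum_congr fun x => by rw [he1 x, mul_one]
    linarith
  obtain ⟨x0, hx0⟩ := hx0
  have hS0 : 0 < S := by
    have h1 : (1 / κ x0 y : ℝ) ≤ S := by
      have := hS.le_tsum x0 (fun b _ => hterm0 b)
      rwa [if_pos hx0] at this
    have : (0:ℝ) < 1 / κ x0 y := one_div_pos.mpr (hκ x0 y)
    linarith
  -- Hölder setup
  set pe : ℝ := (1 + ρ) / ρ with hpe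
  set qe : ℝ := 1 + ρ with hqe
  have hpq : pe.HolderConjugate qe := by
    refine Real.holderConjugate_iff.mpr ⟨?_, ?_⟩
    · rw [hpe, lt_div_iff₀ hρ]; linarith
    · rw [hpe, hqe]; field_simp; ring
  set a : X → ℝ := fun x => if εt x y < 1 then κ x y ^ (-(ρ/(1+ρ))) else 0 with hadef
  set b : X → ℝ := fun x => κ x y ^ (ρ/(1+ρ)) * Q x ^ α with hbdef
  have ha0 : ∀ x, 0 ≤ a x := by
    intro x; rw [hadef]; dsimp only; split
    · exact Real.rpow_nonneg (hκ x y).le _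
    · exact le_rfl
  have hb0 : ∀ x, 0 ≤ b x := by
    intro x
    exact mul_nonneg (Real.rpow_nonneg (hκ x y).le _) (Real.rpow_nonneg (hQ0 x) _)
  have hap : ∀ x, a x ^ pe = (if εt x y < 1 then 1 / κ x y else 0) := by
    intro x; rw [hadef]; dsimp only; split
    · rw [← Real.rpow_mul (hκ x y).le]
      have he : -(ρ/(1+ρ)) * pe = -1 := by rw [hpe]; field_simp; ring
      rw [he, Real.rpow_neg_one, one_div]
    · exact Real.zero_rpow (by rw [hpe]; positivity)
  have hbq : ∀ x, b x ^ qe = (1 - εt x y) * (p x y / pY y) * κ x y ^ ρ := by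
    intro x
    rw [hbdef]; dsimp only
    rw [Real.mul_rpow (Real.rpow_nonneg (hκ x y).le _) (Real.rpow_nonneg (hQ0 x) _),
      ← Real.rpow_mul (hκ x y).le, ← Real.rpow_mul (hQ0 x)]
    have h1 : ρ/(1+ρ) * qe = ρ := by rw [hqe]; field_simp
    have h2 : α * qe = 1 := by rw [hα, hqe]; field_simp
    rw [h1, h2, Real.rpow_one]
    show κ x y ^ ρ * Q x = _
    rw [hQdef]; dsimp only; ring
  have hab : ∀ x, a x * b x = Q x ^ α := by
    intro x
    rw [hadef, hbdef]; dsimp only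
    split
    · rw [← mul_assoc, ← Real.rpow_add (hκ x y), neg_add_cancel, Real.rpow_zero, one_mul]
    · rename_i h
      have he1 : εt x y = 1 := le_antisymm (hεt x y).2 (not_lt.mp h)
      have : Q x = 0 := by rw [hQdef]; dsimp only; rw [he1]; ring
      rw [this, Real.zero_rpow hα0.ne', zero_mul]
  have hfa : Summable (fun x => a x ^ pe) := by
    rw [show (fun x => a x ^ pe) = fun x => (if εt x y < 1 then 1 / κ x y else 0) from funext hap]
    exact hS
  have hfb : Summable (fun x => b x ^ qe) := by
    rw [show (fun x => b x ^ qe) = fun x => (1 - εt x y) * (p x y / pY y) * κ x y ^ ρ from funext hbq]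
    exact hK
  have hHolder := Real.inner_le_Lp_mul_Lq_tsum_of_nonneg hpq ha0 hb0 hfa hfb
  rw [tsum_congr hab, tsum_congr hap, tsum_congr hbq] at hHolder
  set T : ℝ := ∑' x, (1 - εt x y) * (p x y / pY y) * κ x y ^ ρ with hTdef
  have hT0 : 0 ≤ T := tsum_nonneg fun x =>
    mul_nonneg (mul_nonneg (by linarith [(hεt x y).2]) (hP0 x)) (Real.rpow_nonneg (hκ x y).le _)
  -- chain
  have hchain : I ≤ S ^ (1/pe) * T ^ (1/qe) := le_trans hIle hHolder
  have hpow : I ^ qe ≤ S ^ ρ * T := by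
    have hqe0 : (0:ℝ) ≤ qe := by rw [hqe]; linarith
    have h := Real.rpow_le_rpow hI0.le hchain hqe0
    calc I ^ qe ≤ (S ^ (1/pe) * T ^ (1/qe)) ^ qe := h
      _ = S ^ ρ * T := by
          rw [Real.mul_rpow (Real.rpow_nonneg hS0.le _) (Real.rpow_nonneg hT0 _),
            ← Real.rpow_mul hS0.le, ← Real.rpow_mul hT0]
          have h1 : 1/pe * qe = ρ := by rw [hpe, hqe]; field_simp
          have h2 : 1/qe * qe = 1 := by rw [hqe]; field_simp
          rw [h1, h2, Real.rpow_one]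
  -- compute LHS
  have hLHS : (2:ℝ) ^ (ρ * smoothRenyi α δy P - ρ * Real.logb 2 S) = I ^ qe * S ^ (-ρ) := by
    have hcoef : ρ * smoothRenyi α δy P = qe * Real.logb 2 I := by
      rw [smoothRenyi, ← hIdef, hqe, hα]
      have : (1:ℝ) - 1/(1+ρ) = ρ/(1+ρ) := by field_simp; ring
      rw [this]
      field_simp
    rw [hcoef, sub_eq_add_neg, Real.rpow_add two_pos, mul_comm qe, Real.rpow_mul (by norm_num : (0:ℝ) ≤ 2),
      Real.rpow_logb two_pos (by norm_num) hI0, ← neg_mul, mul_comm (-ρ),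
      Real.rpow_mul (by norm_num : (0:ℝ) ≤ 2), Real.rpow_logb two_pos (by norm_num) hS0]
  rw [hLHS]
  have : I ^ qe * S ^ (-ρ) ≤ (S ^ ρ * T) * S ^ (-ρ) :=
    mul_le_mul_of_nonneg_right hpow (Real.rpow_nonneg hS0.le _)
  calc I ^ qe * S ^ (-ρ) ≤ (S ^ ρ * T) * S ^ (-ρ) := this
    _ = T * (S ^ ρ * S ^ (-ρ)) := by ring
    _ = T := by rw [← Real.rpow_add hS0, add_neg_cancel, Real.rpow_zero, mul_one]
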